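/- Let q : S × A → ℝ satisfy q(s,a) ≥ (T*_β q)(s,a) for all (s,a). Then for every policy π with π ⪯ β and every q̃^π : S × A → ℝ with q̃^π = T^π q̃^π, one has q(s,a) ≥ q̃^π(s,a) for all (s,a). -/

import Mathlib

open Finset

/-- The in-sample softmax optimality operator
`(T*_β q)(s,a) = r(s,a) + γ ∑_{s'} P(s,a)(s') · τ log ∑_{a' ∈ supp β(·|s')} exp(q(s',a')/τ)`. -/
noncomputable def Tstar {S A : Type*} [Fintype S] [Fintype A]
    (r : S → A → ℝ) (γ τ : ℝ) (P : S → A → S → ℝ) (β : S → A → ℝ)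
    (q : S → A → ℝ) : S → A → ℝ := fun s a =>
  r s a + γ * ∑ s', P s a s' *
    (τ * Real.log (∑ a' ∈ Finset.univ.filter (fun a' => 0 < β s' a'), Real.exp (q s' a' / τ)))

/-- The on-policy entropy-regularized Bellman operator
`(T^π q)(s,a) = r(s,a) + γ ∑_{s'} P(s,a)(s') ∑_{a' ∈ supp π(·|s')} π(a'|s')(q(s',a') − τ log π(a'|s'))`. -/
noncomputable def Ton {S A : Type*} [Fintype S] [Fintype A]
    (r : S → A → ℝ) (γ τ : ℝ) (P : S → A → S → ℝ) (π : S → A → ℝ)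
    (q : S → A → ℝ) : S → A → ℝ := fun s a =>
  r s a + γ * ∑ s', P s a s' *
    (∑ a' ∈ Finset.univ.filter (fun a' => 0 < π s' a'),
      π s' a' * (q s' a' - τ * Real.log (π s' a')))


/-- Gibbs inequality: entropy-regularized average is at most τ·log-sum-exp over any
set containing the support. -/
lemma gibbs {A : Type*} [Fintype A] (τ : ℝ) (hτ : 0 < τ)
    (w x : A → ℝ) (hw0 : ∀ a, 0 ≤ w a) (hw1 : ∑ a, w a = 1)
    (F : Finset A) (hsub : ∀ a, 0 < w a → a ∈ F) :
    ∑ a ∈ Finset.univ.filter (fun a => 0 < w a), w a * (x a - τ * Real.log (w a))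
      ≤ τ * Real.log (∑ a ∈ F, Real.exp (x a / τ)) := by
  set Sw := Finset.univ.filter (fun a => 0 < w a) with hSw
  have hmem : ∀ a, a ∈ Sw ↔ 0 < w a := by
    intro a; simp [hSw]
  have hsumw : ∑ a ∈ Sw, w a = 1 := by
    rw [← hw1]
    apply Finset.sum_filter_of_ne
    intro a _ h
    exact lt_of_le_of_ne (hw0 a) (Ne.symm h)
  have hne : Sw.Nonempty := by
    by_contra h
    rw [Finset.not_nonempty_iff_eq_empty] at h
    rw [h, Finset.sum_empty] at hsumw
    norm_num at hsumw
  set T := ∑ a ∈ Sw, Real.exp (x a / τ) with hT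
  have hTpos : 0 < T := Finset.sum_pos (fun a _ => Real.exp_pos _) hne
  -- key: ∑ w a * (x a - τ log w a) ≤ τ log T
  have key : ∑ a ∈ Sw, w a * (x a - τ * Real.log (w a)) ≤ τ * Real.log T := by
    have step : ∀ a ∈ Sw, w a * (x a - τ * Real.log (w a))
        ≤ τ * (w a * Real.log T + Real.exp (x a / τ) / T - w a) := by
      intro a ha
      have hwa : 0 < w a := (hmem a).mp ha
      have hepos : 0 < Real.exp (x a / τ) := Real.exp_pos _
      have hlog : Real.log (Real.exp (x a / τ) / (w a * T))
          ≤ Real.exp (x a / τ) / (w a * T) - 1 :=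
        Real.log_le_sub_one_of_pos (by positivity)
      have hsplit : Real.log (Real.exp (x a / τ) / (w a * T))
          = x a / τ - Real.log (w a) - Real.log T := by
        rw [Real.log_div hepos.ne' (by positivity), Real.log_exp, Real.log_mul hwa.ne' hTpos.ne']
        ring
      rw [hsplit] at hlog
      have := mul_le_mul_of_nonneg_left hlog (le_of_lt (mul_pos hτ hwa))
      have heq : τ * w a * (Real.exp (x a / τ) / (w a * T) - 1)
          = τ * (Real.exp (x a / τ) / T - w a) := by
        field_simp
      have heq2 : τ * w a * (x a / τ - Real.log (w a) - Real.log T)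
          = w a * (x a - τ * Real.log (w a)) - τ * (w a * Real.log T) := by
        field_simp
      linarith [this, heq, heq2]
    calc ∑ a ∈ Sw, w a * (x a - τ * Real.log (w a))
        ≤ ∑ a ∈ Sw, τ * (w a * Real.log T + Real.exp (x a / τ) / T - w a) :=
          Finset.sum_le_sum step
      _ = τ * Real.log T := by
          rw [← Finset.mul_sum]
          rw [Finset.sum_sub_distrib, Finset.sum_add_distrib, ← Finset.sum_mul, hsumw,
            ← Finset.sum_div, ← hT]
          field_simp
          ring
  -- T ≤ ∑ over F
  have hTF : T ≤ ∑ a ∈ F, Real.exp (x a / τ) := by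
    apply Finset.sum_le_sum_of_subset_of_nonneg
    · intro a ha; exact hsub a ((hmem a).mp ha)
    · intro a _ _; exact (Real.exp_pos _).le
  calc ∑ a ∈ Sw, w a * (x a - τ * Real.log (w a)) ≤ τ * Real.log T := key
    _ ≤ τ * Real.log (∑ a ∈ F, Real.exp (x a / τ)) := by
        apply mul_le_mul_of_nonneg_left _ hτ.le
        exact Real.log_le_log hTpos hTF


/-- Pointwise comparison: `T^π q ≤ T*_β q` when `π ⪯ β`. -/
lemma Ton_le_Tstar {S A : Type*} [Fintype S] [Fintype A]
    (r : S → A → ℝ) (γ : ℝ) (hγ0 : 0 ≤ γ)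
    (P : S → A → S → ℝ) (hP0 : ∀ s a s', 0 ≤ P s a s')
    (τ : ℝ) (hτ : 0 < τ) (β π : S → A → ℝ)
    (hπ0 : ∀ s a, 0 ≤ π s a) (hπ1 : ∀ s, (∑ a, π s a) = 1)
    (hsupp : ∀ s a, 0 < π s a → 0 < β s a)
    (q : S → A → ℝ) (s : S) (a : A) :
    Ton r γ τ P π q s a ≤ Tstar r γ τ P β q s a := by
  unfold Ton Tstar
  refine add_le_add_right (mul_le_mul_of_nonneg_left (Finset.sum_le_sum ?_) hγ0) _
  intro s' _
  refine mul_le_mul_of_nonneg_left ?_ (hP0 s a s')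
  refine gibbs τ hτ (π s') (q s') (hπ0 s') (hπ1 s') _ ?_
  intro a' h
  simp only [Finset.mem_filter, Finset.mem_univ, true_and]
  exact hsupp s' a' h

/-- If `q ≥ T*_β q` pointwise, then `q` dominates the entropy-regularized value `q̃^π` of
every policy `π ⪯ β` (where `q̃^π = T^π q̃^π`). -/
theorem Tstar_subsolution_dominates {S A : Type*}
    [Fintype S] [Fintype A] [Nonempty S] [Nonempty A]
    (r : S → A → ℝ) (γ : ℝ) (hγ0 : 0 ≤ γ) (hγ1 : γ < 1)
    (P : S → A → S → ℝ) (hP0 : ∀ s a s', 0 ≤ P s a s') (hP1 : ∀ s a, (∑ s', P s a s') = 1)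
    (τ : ℝ) (hτ : 0 < τ)
    (β : S → A → ℝ) (hβ0 : ∀ s a, 0 ≤ β s a) (hβ1 : ∀ s, (∑ a, β s a) = 1)
    (q : S → A → ℝ) (hq : ∀ s a, Tstar r γ τ P β q s a ≤ q s a) :
    ∀ (π : S → A → ℝ), (∀ s a, 0 ≤ π s a) → (∀ s, (∑ a, π s a) = 1) →
      (∀ s a, 0 < π s a → 0 < β s a) →
      ∀ qpi : S → A → ℝ, qpi = Ton r γ τ P π qpi →
      ∀ s a, qpi s a ≤ q s a := by

  intro π hπ0 hπ1 hsupp qpi hfix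
  set f : S × A → ℝ := fun p => qpi p.1 p.2 - q p.1 p.2 with hf
  have hune : (Finset.univ : Finset (S × A)).Nonempty := Finset.univ_nonempty
  set M := Finset.univ.sup' hune f with hM
  have hle : ∀ s a, f (s, a) ≤ M := fun s a => Finset.le_sup' f (Finset.mem_univ _)
  -- support sums to 1
  have hπsum : ∀ s', ∑ a' ∈ Finset.univ.filter (fun a' => 0 < π s' a'), π s' a' = 1 := by
    intro s'
    rw [← hπ1 s']
    apply Finset.sum_filter_of_ne
    intro a _ h
    exact lt_of_le_of_ne (hπ0 s' a) (Ne.symm h)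
  -- key: for all s a, qpi s a - q s a ≤ γ * M
  have hkey : ∀ s a, qpi s a - q s a ≤ γ * M := by
    intro s a
    have h1 : Ton r γ τ P π q s a ≤ q s a :=
      le_trans (Ton_le_Tstar r γ hγ0 P hP0 τ hτ β π hπ0 hπ1 hsupp q s a) (hq s a)
    have h2 : Ton r γ τ P π qpi s a - Ton r γ τ P π q s a ≤ γ * M := by
      unfold Ton
      have hinner : ∀ s', (∑ a' ∈ Finset.univ.filter (fun a' => 0 < π s' a'),
            π s' a' * (qpi s' a' - τ * Real.log (π s' a')))
          - (∑ a' ∈ Finset.univ.filter (fun a' => 0 < π s' a'),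
            π s' a' * (q s' a' - τ * Real.log (π s' a'))) ≤ M := by
        intro s'
        rw [← Finset.sum_sub_distrib]
        calc ∑ a' ∈ Finset.univ.filter (fun a' => 0 < π s' a'),
              (π s' a' * (qpi s' a' - τ * Real.log (π s' a'))
                - π s' a' * (q s' a' - τ * Real.log (π s' a')))
            = ∑ a' ∈ Finset.univ.filter (fun a' => 0 < π s' a'),
              π s' a' * (qpi s' a' - q s' a') := by
              apply Finset.sum_congr rfl; intro a' _; ring
          _ ≤ ∑ a' ∈ Finset.univ.filter (fun a' => 0 < π s' a'), π s' a' * M := by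
              apply Finset.sum_le_sum
              intro a' ha'
              have : 0 < π s' a' := by simpa using ha'
              exact mul_le_mul_of_nonneg_left (hle s' a') this.le
          _ = M := by rw [← Finset.sum_mul, hπsum s', one_mul]
      have : ∑ s', P s a s' * (∑ a' ∈ Finset.univ.filter (fun a' => 0 < π s' a'),
              π s' a' * (qpi s' a' - τ * Real.log (π s' a')))
          - ∑ s', P s a s' * (∑ a' ∈ Finset.univ.filter (fun a' => 0 < π s' a'),
              π s' a' * (q s' a' - τ * Real.log (π s' a'))) ≤ M := by
        rw [← Finset.sum_sub_distrib]
        calc ∑ s', (P s a s' * _ - P s a s' * _)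
            = ∑ s', P s a s' * ((∑ a' ∈ Finset.univ.filter (fun a' => 0 < π s' a'),
                π s' a' * (qpi s' a' - τ * Real.log (π s' a')))
              - (∑ a' ∈ Finset.univ.filter (fun a' => 0 < π s' a'),
                π s' a' * (q s' a' - τ * Real.log (π s' a')))) := by
              apply Finset.sum_congr rfl; intro s' _; ring
          _ ≤ ∑ s', P s a s' * M := by
              apply Finset.sum_le_sum
              intro s' _
              exact mul_le_mul_of_nonneg_left (hinner s') (hP0 s a s')
          _ = M := by rw [← Finset.sum_mul, hP1 s a, one_mul]
      nlinarith [this]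
    have h3 : qpi s a = Ton r γ τ P π qpi s a := by rw [← hfix]
    linarith
  -- M ≤ γ * M, hence M ≤ 0
  obtain ⟨p0, _, hp0⟩ := Finset.exists_mem_eq_sup' hune f
  have hMf : M = f p0 := hM.trans hp0
  have hMγ : M ≤ γ * M := by
    conv_lhs => rw [hMf]
    exact hkey p0.1 p0.2
  have hM0 : M ≤ 0 := by nlinarith
  intro s a
  have := hle s a
  simp only [hf] at this
  linarith
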